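/- The three Born-rule exclusions of the modified Frauchiger–Renner paradox: let ψ^{t=2} = (e₀⊗e₀⊗e₀⊗e₀ + e₁⊗e₁⊗e₀⊗e₀ + e₁⊗e₁⊗e₁⊗e₁)/√3 in EuclideanSpace ℂ ((Fin 2 × Fin 2) × (Fin 2 × Fin 2)) (tensor factors ordered S_A, L_A, S_B, L_B), and let ok = (e₀⊗e₀ − e₁⊗e₁)/√2 in EuclideanSpace ℂ (Fin 2 × Fin 2). Then: (i) ⟪ok ⊗ (e₀⊗e₀), ψ^{t=2}⟫ = 0 (Ursula excludes b = 0 given u = ok); (ii) ⟪(e₁⊗e₁) ⊗ ok, ψ^{t=2}⟫ = 0 (Wigner excludes a = 1 given w = ok); and (iii) ⟪(e₀⊗e₀) ⊗ (e₁⊗e₁), ψ^{t=2}⟫ = 0 (Zeno excludes the joint outcome a = 0, b = 1). -/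

import Mathlib

open scoped InnerProductSpace

noncomputable section

/-- Standard basis vectors `e₀, e₁` of `ℂ²`. -/
def e (a : Fin 2) : EuclideanSpace ℂ (Fin 2) := EuclideanSpace.single a 1

/-- Twofold product vector: `(eₐ⊗e_b)(j,k) = eₐ(j)·e_b(k)`. -/
def tp2 (φ χ : EuclideanSpace ℂ (Fin 2)) :
    EuclideanSpace ℂ (Fin 2 × Fin 2) :=
  WithLp.toLp 2 (fun p : Fin 2 × Fin 2 => φ p.1 * χ p.2)

/-- Product of two two-qubit vectors:
`(φ⊗χ)((j,k),(l,m)) = φ(j,k)·χ(l,m)`. -/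
def tpPair (φ χ : EuclideanSpace ℂ (Fin 2 × Fin 2)) :
    EuclideanSpace ℂ ((Fin 2 × Fin 2) × (Fin 2 × Fin 2)) :=
  WithLp.toLp 2 (fun p : (Fin 2 × Fin 2) × (Fin 2 × Fin 2) => φ p.1 * χ p.2)

/-- State of the Frauchiger–Renner protocol after the friends' measurements
are modelled unitarily (tensor factors ordered `S_A, L_A, S_B, L_B`). -/
def ψt2 : EuclideanSpace ℂ ((Fin 2 × Fin 2) × (Fin 2 × Fin 2)) :=
  (Real.sqrt 3 : ℂ)⁻¹ •
    (tpPair (tp2 (e 0) (e 0)) (tp2 (e 0) (e 0)) +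
      tpPair (tp2 (e 1) (e 1)) (tp2 (e 0) (e 0)) +
      tpPair (tp2 (e 1) (e 1)) (tp2 (e 1) (e 1)))

/-- The superobservers' supermeasurement basis vector
`ok = (e₀⊗e₀ − e₁⊗e₁)/√2`. -/
def ok : EuclideanSpace ℂ (Fin 2 × Fin 2) :=
  (Real.sqrt 2 : ℂ)⁻¹ • (tp2 (e 0) (e 0) - tp2 (e 1) (e 1))

/-- The three Born-rule exclusions of the modified Frauchiger–Renner paradox:
(i) Ursula excludes `b = 0` given `u = ok`; (ii) Wigner excludes `a = 1` given
`w = ok`; (iii) Zeno excludes the joint outcome `a = 0, b = 1`. -/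
theorem fr_born_rule_exclusions :
    ⟪tpPair ok (tp2 (e 0) (e 0)), ψt2⟫_ℂ = 0 ∧
    ⟪tpPair (tp2 (e 1) (e 1)) ok, ψt2⟫_ℂ = 0 ∧
    ⟪tpPair (tp2 (e 0) (e 0)) (tp2 (e 1) (e 1)), ψt2⟫_ℂ = 0 := by
  refine ⟨?_, ?_, ?_⟩ <;>
  · simp only [PiLp.inner_apply, ψt2, ok, tpPair, tp2, e, EuclideanSpace.single_apply,
      PiLp.smul_apply, PiLp.add_apply, PiLp.sub_apply, smul_eq_mul,
      Fintype.sum_prod_type, Fin.sum_univ_two, PiLp.toLp_apply]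
    norm_num
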